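/- arXiv:1903.04327 — 4 statements merged into one kernel-verified Lean document; each statement's English description precedes it below -/
import Mathlib

section
/- Let Q be a connected quiver, c: C → Q a universal cover (a tree-shaped cover) and d: D → Q any cover. Then there exists a morphism of quivers p: C → D with d ∘ p = c. -/
/-- A quiver: a set of vertices, a set of arrows, and source/target maps. -/
structure Quiv where
  V : Type
  A : Type
  s : A → V
  t : A → V

namespace Quiv

variable (Q : Quiv)

/-- A step in the double quiver of `Q`: an arrow together with an orientation
(`true` = the arrow itself, `false` = its formal inverse). -/
abbrev Step := Q.A × Bool

/-- Source of a step of the double quiver. -/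
def src (e : Q.Step) : Q.V := if e.2 then Q.s e.1 else Q.t e.1

/-- Target of a step of the double quiver. -/
def tgt (e : Q.Step) : Q.V := if e.2 then Q.t e.1 else Q.s e.1

/-- `Q.IsWalk i j l` : the list of steps `l` is an unoriented path
(a path in the double quiver) from `i` to `j`. -/
def IsWalk : Q.V → Q.V → List Q.Step → Prop
  | i, j, [] => i = j
  | i, j, e :: l => Q.src e = i ∧ IsWalk (Q.tgt e) j l

/-- A quiver is connected if any two vertices are joined by an unoriented path. -/
def Connected : Prop := ∀ i j : Q.V, ∃ l, Q.IsWalk i j l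

/-- An unoriented path is reduced if it has positive length and contains no
subword of the form `α α⁻¹` or `α⁻¹ α`. -/
def Reduced (l : List Q.Step) : Prop :=
  l ≠ [] ∧ l.Chain' fun e f => ¬(e.1 = f.1 ∧ e.2 = !f.2)

/-- A quiver is tree-shaped if it is connected and has no reduced unoriented cycles. -/
def TreeShaped : Prop :=
  Q.Connected ∧ ∀ (i : Q.V) (l : List Q.Step), Q.IsWalk i i l → ¬ Q.Reduced l

end Quiv

/-- A morphism of quivers. -/
structure QuivHom (C Q : Quiv) where
  v : C.V → Q.V
  a : C.A → Q.A
  hs : ∀ b, Q.s (a b) = v (C.s b)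
  ht : ∀ b, Q.t (a b) = v (C.t b)

/-- A morphism of quivers is a cover if it is surjective on vertices and arrows
and induces bijections between the arrows starting (resp. ending) at any vertex `x`
and the arrows starting (resp. ending) at its image. -/
def QuivHom.IsCover {C Q : Quiv} (c : QuivHom C Q) : Prop :=
  Function.Surjective c.v ∧ Function.Surjective c.a ∧
    ∀ x : C.V,
      Set.BijOn c.a {b | C.s b = x} {α | Q.s α = c.v x} ∧
      Set.BijOn c.a {b | C.t b = x} {α | Q.t α = c.v x}

namespace UCover

open Quiv

variable {Q : Quiv}

/-- Formal inverse of an unoriented path. -/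
def inv (l : List Q.Step) : List Q.Step := (l.map fun e => (e.1, !e.2)).reverse

@[simp] theorem src_not (e : Q.Step) : Q.src (e.1, !e.2) = Q.tgt e := by
  cases h : e.2 <;> simp [Quiv.src, Quiv.tgt, h]

@[simp] theorem tgt_not (e : Q.Step) : Q.tgt (e.1, !e.2) = Q.src e := by
  cases h : e.2 <;> simp [Quiv.src, Quiv.tgt, h]

theorem isWalk_append {i j k : Q.V} :
    ∀ {l₁ l₂ : List Q.Step}, Q.IsWalk i j l₁ → Q.IsWalk j k l₂ → Q.IsWalk i k (l₁ ++ l₂) := by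
  intro l₁
  induction l₁ generalizing i with
  | nil => intro l₂ h1 h2; cases h1; simpa using h2
  | cons e l ih =>
    intro l₂ h1 h2
    exact ⟨h1.1, ih h1.2 h2⟩

theorem isWalk_split {i k : Q.V} :
    ∀ {l₁ l₂ : List Q.Step}, Q.IsWalk i k (l₁ ++ l₂) →
      ∃ j, Q.IsWalk i j l₁ ∧ Q.IsWalk j k l₂ := by
  intro l₁
  induction l₁ generalizing i with
  | nil => intro l₂ h; exact ⟨i, rfl, h⟩
  | cons e l ih =>
    intro l₂ h
    obtain ⟨j, h1, h2⟩ := ih h.2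
    exact ⟨j, ⟨h.1, h1⟩, h2⟩

theorem isWalk_inv {i j : Q.V} :
    ∀ {l : List Q.Step}, Q.IsWalk i j l → Q.IsWalk j i (inv l) := by
  intro l
  induction l generalizing i with
  | nil => intro h; cases h; exact rfl
  | cons e l ih =>
    intro h
    have : inv (e :: l) = inv l ++ [(e.1, !e.2)] := by simp [inv]
    rw [this]
    refine isWalk_append (ih h.2) ?_
    exact ⟨src_not e, by simpa [Quiv.IsWalk] using h.1⟩

theorem inv_inv (l : List Q.Step) : inv (inv l) = l := by
  simp [inv, List.map_reverse, List.map_map, Function.comp_def]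

/-- Removing a cancelling pair from a walk yields a walk. -/
theorem isWalk_cancel {i j : Q.V} :
    ∀ {l₁ l₂ : List Q.Step} {e : Q.Step},
      Q.IsWalk i j (l₁ ++ e :: (e.1, !e.2) :: l₂) → Q.IsWalk i j (l₁ ++ l₂) := by
  intro l₁
  induction l₁ generalizing i with
  | nil =>
    intro l₂ e h
    obtain ⟨h1, h2, h3⟩ := h
    rw [tgt_not] at h3
    rw [h1] at h3
    simpa using h3
  | cons f l ih =>
    intro l₂ e h
    exact ⟨h.1, ih h.2⟩

section Lift

open scoped Classical
variable {D : Quiv} (d : QuivHom D Q) (hd : d.IsCover)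
include hd

theorem exists_lift (y : D.V) (e : Q.Step) (h : Q.src e = d.v y) :
    ∃ b : D.A, d.a b = e.1 ∧ (if e.2 then D.s b = y else D.t b = y) := by
  cases he : e.2 with
  | true =>
    have hmem : e.1 ∈ {α | Q.s α = d.v y} := by
      simpa [Quiv.src, he] using h
    obtain ⟨b, hb, hab⟩ := (hd.2.2 y).1.2.2 hmem
    exact ⟨b, hab, by simpa using hb⟩
  | false =>
    have hmem : e.1 ∈ {α | Q.t α = d.v y} := by
      simpa [Quiv.src, he] using h
    obtain ⟨b, hb, hab⟩ := (hd.2.2 y).2.2.2 hmem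
    exact ⟨b, hab, by simpa using hb⟩

theorem lift_unique (y : D.V) (e : Q.Step) {b₁ b₂ : D.A}
    (h₁ : d.a b₁ = e.1 ∧ (if e.2 then D.s b₁ = y else D.t b₁ = y))
    (h₂ : d.a b₂ = e.1 ∧ (if e.2 then D.s b₂ = y else D.t b₂ = y)) : b₁ = b₂ := by
  cases he : e.2 with
  | true =>
    rw [he] at h₁ h₂; simp at h₁ h₂
    exact (hd.2.2 y).1.2.1 h₁.2 h₂.2 (h₁.1.trans h₂.1.symm)
  | false =>
    rw [he] at h₁ h₂; simp at h₁ h₂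
    exact (hd.2.2 y).2.2.1 h₁.2 h₂.2 (h₁.1.trans h₂.1.symm)

noncomputable def liftArrow (y : D.V) (e : Q.Step) (h : Q.src e = d.v y) : D.A :=
  (exists_lift d hd y e h).choose

theorem liftArrow_spec (y : D.V) (e : Q.Step) (h : Q.src e = d.v y) :
    d.a (liftArrow d hd y e h) = e.1 ∧
      (if e.2 then D.s (liftArrow d hd y e h) = y else D.t (liftArrow d hd y e h) = y) :=
  (exists_lift d hd y e h).choose_spec

noncomputable def stepEnd (y : D.V) (e : Q.Step) : D.V :=
  if h : Q.src e = d.v y then D.tgt (liftArrow d hd y e h, e.2) else y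

theorem dv_stepEnd {y : D.V} {e : Q.Step} (h : Q.src e = d.v y) :
    d.v (stepEnd d hd y e) = Q.tgt e := by
  rw [stepEnd, dif_pos h]
  obtain ⟨ha, hb⟩ := liftArrow_spec d hd y e h
  cases he : e.2 with
  | true => simp only [Quiv.tgt, he, if_true]; rw [← ha]; exact (d.ht _).symm
  | false => simp only [Quiv.tgt, he, if_false]; rw [← ha]; exact (d.hs _).symm

noncomputable def liftEnd (y : D.V) : List Q.Step → D.V
  | [] => y
  | e :: l => liftEnd (stepEnd d hd y e) l

theorem dv_liftEnd {j : Q.V} :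
    ∀ {l : List Q.Step} {y : D.V}, Q.IsWalk (d.v y) j l → d.v (liftEnd d hd y l) = j := by
  intro l
  induction l with
  | nil => intro y h; exact h.symm ▸ rfl
  | cons e l ih =>
    intro y h
    have h1 : Q.src e = d.v y := h.1
    have h2 := dv_stepEnd d hd h1
    exact ih (by rw [h2]; exact h.2)

theorem liftEnd_append (y : D.V) (l₁ l₂ : List Q.Step) :
    liftEnd d hd y (l₁ ++ l₂) = liftEnd d hd (liftEnd d hd y l₁) l₂ := by
  induction l₁ generalizing y with
  | nil => rfl
  | cons e l ih => simp [liftEnd, ih]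

theorem stepEnd_inv {y : D.V} {e : Q.Step} (h : Q.src e = d.v y) :
    stepEnd d hd (stepEnd d hd y e) (e.1, !e.2) = y := by
  set b := liftArrow d hd y e h with hb
  obtain ⟨ha, hcond⟩ := liftArrow_spec d hd y e h
  have h' : Q.src (e.1, !e.2) = d.v (stepEnd d hd y e) := by
    rw [src_not, dv_stepEnd d hd h]
  rw [stepEnd, dif_pos h']
  have hbeq : liftArrow d hd (stepEnd d hd y e) (e.1, !e.2) h' = b := by
    refine lift_unique d hd _ (e.1, !e.2) (liftArrow_spec d hd _ _ h') ⟨ha, ?_⟩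
    rw [stepEnd, dif_pos h]
    cases he : e.2 with
    | true => simp [Quiv.tgt, he, hb]
    | false => simp [Quiv.tgt, he, hb]
  rw [hbeq]
  cases he : e.2 with
  | true => rw [he] at hcond; simpa [Quiv.tgt, he] using hcond
  | false => rw [he] at hcond; simpa [Quiv.tgt, he] using hcond

theorem liftEnd_inv {j : Q.V} :
    ∀ {l : List Q.Step} {y : D.V}, Q.IsWalk (d.v y) j l →
      liftEnd d hd (liftEnd d hd y l) (inv l) = y := by
  intro l
  induction l with
  | nil => intro y _; rfl
  | cons e l ih =>
    intro y h
    have h1 : Q.src e = d.v y := h.1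
    have h2 : Q.IsWalk (d.v (stepEnd d hd y e)) j l := by
      rw [dv_stepEnd d hd h1]; exact h.2
    have : inv (e :: l) = inv l ++ [(e.1, !e.2)] := by simp [inv]
    rw [this]
    show liftEnd d hd (liftEnd d hd (stepEnd d hd y e) l) (inv l ++ [(e.1, !e.2)]) = y
    rw [liftEnd_append, ih h2]
    show stepEnd d hd (stepEnd d hd y e) (e.1, !e.2) = y
    exact stepEnd_inv d hd h1

end Lift

section Main

open scoped Classical
variable {C D : Quiv} (c : QuivHom C Q) (d : QuivHom D Q) (hd : d.IsCover)

/-- Image of an unoriented path under a quiver morphism. -/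
def mapc (c : QuivHom C Q) (l : List C.Step) : List Q.Step := l.map fun e => (c.a e.1, e.2)

theorem src_mapc (e : C.Step) : Q.src (c.a e.1, e.2) = c.v (C.src e) := by
  cases he : e.2 <;> simp [Quiv.src, he, c.hs, c.ht]

theorem tgt_mapc (e : C.Step) : Q.tgt (c.a e.1, e.2) = c.v (C.tgt e) := by
  cases he : e.2 <;> simp [Quiv.tgt, he, c.hs, c.ht]

theorem isWalk_mapc {i j : C.V} :
    ∀ {l : List C.Step}, C.IsWalk i j l → Q.IsWalk (c.v i) (c.v j) (mapc c l) := by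
  intro l
  induction l generalizing i with
  | nil => intro h; cases h; rfl
  | cons e l ih =>
    intro h
    refine ⟨by rw [src_mapc, h.1], ?_⟩
    rw [tgt_mapc]
    exact ih h.2

theorem mapc_inv (l : List C.Step) : mapc c (inv l) = inv (mapc c l) := by
  simp [mapc, inv, List.map_reverse, List.map_map, Function.comp_def]

include hd

/-- Lifting is invariant under removing a cancelling pair. -/
theorem liftEnd_cancel {i j : C.V} {y : D.V} (hy : d.v y = c.v i)
    (l₁ l₂ : List C.Step) (e : C.Step)
    (hw : C.IsWalk i j (l₁ ++ e :: (e.1, !e.2) :: l₂)) :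
    liftEnd d hd y (mapc c (l₁ ++ e :: (e.1, !e.2) :: l₂)) =
      liftEnd d hd y (mapc c (l₁ ++ l₂)) := by
  obtain ⟨k, hw1, hw2⟩ := isWalk_split hw
  have hk : k = C.src e := hw2.1.symm
  have hmap : mapc c (l₁ ++ e :: (e.1, !e.2) :: l₂)
      = mapc c l₁ ++ (c.a e.1, e.2) :: ((c.a e.1, e.2).1, !(c.a e.1, e.2).2) :: mapc c l₂ := by
    simp [mapc]
  have hmap2 : mapc c (l₁ ++ l₂) = mapc c l₁ ++ mapc c l₂ := by simp [mapc]
  rw [hmap, hmap2, liftEnd_append, liftEnd_append]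
  have hy1 : d.v (liftEnd d hd y (mapc c l₁)) = c.v k := by
    refine dv_liftEnd d hd ?_
    rw [hy]; exact isWalk_mapc c hw1
  have hsrc : Q.src (c.a e.1, e.2) = d.v (liftEnd d hd y (mapc c l₁)) := by
    rw [hy1, hk, ← src_mapc c e]
  show liftEnd d hd (stepEnd d hd _ _) _ = _
  show liftEnd d hd (stepEnd d hd (stepEnd d hd _ (c.a e.1, e.2)) _) (mapc c l₂) = _
  rw [stepEnd_inv d hd hsrc]

/-- Lifting a cycle of a tree-shaped quiver returns to the starting point. -/
theorem liftEnd_cycle (hC : C.TreeShaped) :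
    ∀ (n : ℕ) (l : List C.Step) (i : C.V) (y : D.V), l.length ≤ n →
      C.IsWalk i i l → d.v y = c.v i → liftEnd d hd y (mapc c l) = y := by
  intro n
  induction n with
  | zero =>
    intro l i y hlen hw _
    rw [List.length_eq_zero_iff.mp (Nat.le_zero.mp hlen)]
    rfl
  | succ n ih =>
    intro l i y hlen hw hy
    rcases eq_or_ne l [] with rfl | hne
    · rfl
    · have hnotred := hC.2 i l hw
      rw [Quiv.Reduced] at hnotred
      have hchain : ¬ l.Chain' fun e f => ¬(e.1 = f.1 ∧ e.2 = !f.2) := fun h => hnotred ⟨hne, h⟩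
      change ¬ l.IsChain _ at hchain
      rw [List.isChain_iff_getElem] at hchain
      push_neg at hchain
      obtain ⟨m, hm, he⟩ := hchain
      have hm1 : m < l.length := by omega
      have hm2 : m + 1 < l.length := by omega
      have hf : l.get ⟨m + 1, hm2⟩ = ((l.get ⟨m, hm1⟩).1, !(l.get ⟨m, hm1⟩).2) := by
        have h1 := he.1
        have h2 := he.2
        refine Prod.ext h1.symm ?_
        simp only [List.get_eq_getElem] at h2 ⊢
        rw [h2, Bool.not_not]
      set e := l.get ⟨m, hm1⟩ with hedef
      have hgetm : l[m] = e := by simp [hedef]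
      have hgetm1 : l[m + 1] = (e.1, !e.2) := by rw [← hf]; simp
      have hsplit : l = l.take m ++ e :: (e.1, !e.2) :: l.drop (m + 2) := by
        have : l.take m ++ e :: (e.1, !e.2) :: l.drop (m + 2) = l := by
          rw [← hgetm1, ← hgetm, ← List.drop_eq_getElem_cons hm2,
            ← List.drop_eq_getElem_cons hm1, List.take_append_drop]
        exact this.symm
      have hw' : C.IsWalk i i (l.take m ++ l.drop (m + 2)) :=
        isWalk_cancel (hsplit ▸ hw)
      have hlen' : (l.take m ++ l.drop (m + 2)).length ≤ n := by
        have := congrArg List.length hsplit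
        simp at this ⊢
        omega
      calc liftEnd d hd y (mapc c l)
          = liftEnd d hd y (mapc c (l.take m ++ l.drop (m + 2))) := by
            conv_lhs => rw [hsplit]
            exact liftEnd_cancel c d hd hy _ _ _ (hsplit ▸ hw)
        _ = y := ih _ i y hlen' hw' hy

/-- Well-definedness: any two walks from `x₀` to `x` lift to the same endpoint. -/
theorem liftEnd_welldef (hC : C.TreeShaped) {x₀ x : C.V} {y₀ : D.V}
    (hy : d.v y₀ = c.v x₀) {l l₀ : List C.Step}
    (hl : C.IsWalk x₀ x l) (hl₀ : C.IsWalk x₀ x l₀) :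
    liftEnd d hd y₀ (mapc c l) = liftEnd d hd y₀ (mapc c l₀) := by
  set L := liftEnd d hd y₀ (mapc c l) with hL
  set m₀ := mapc c l₀ with hm₀
  have hcycle : C.IsWalk x₀ x₀ (l ++ inv l₀) := isWalk_append hl (isWalk_inv hl₀)
  have h1 : liftEnd d hd y₀ (mapc c (l ++ inv l₀)) = y₀ :=
    liftEnd_cycle c d hd hC _ _ _ _ le_rfl hcycle hy
  have hmapapp : mapc c (l ++ inv l₀) = mapc c l ++ inv m₀ := by
    rw [hm₀, ← mapc_inv]; simp [mapc]
  rw [hmapapp, liftEnd_append] at h1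
  have hdvL : d.v L = c.v x := by
    refine dv_liftEnd d hd ?_
    rw [hy]; exact isWalk_mapc c hl
  have hwinv : Q.IsWalk (d.v L) (c.v x₀) (inv m₀) := by
    rw [hdvL]
    exact isWalk_inv (isWalk_mapc c hl₀)
  have h2 := liftEnd_inv d hd (l := inv m₀) (y := L) hwinv
  rw [inv_inv] at h2
  rw [h1] at h2
  exact h2.symm

end Main

end UCover

/-- Let `Q` be a connected quiver, `c : C → Q` a universal cover
(i.e. a cover with `C` tree-shaped) and `d : D → Q` any cover. Then there exists a
morphism of quivers `p : C → D` with `d ∘ p = c`. -/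
theorem stmt1 {C D Q : Quiv} (hQ : Q.Connected)
    (c : QuivHom C Q) (hc : c.IsCover) (hC : C.TreeShaped)
    (d : QuivHom D Q) (hd : d.IsCover) :
    ∃ p : QuivHom C D, (∀ x : C.V, d.v (p.v x) = c.v x) ∧ (∀ b : C.A, d.a (p.a b) = c.a b) := by
  classical
  rcases isEmpty_or_nonempty C.V with hE | hN
  · haveI : IsEmpty C.A := ⟨fun b => hE.false (C.s b)⟩
    exact ⟨⟨fun x => isEmptyElim x, fun b => isEmptyElim b,
      fun b => isEmptyElim b, fun b => isEmptyElim b⟩,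
      fun x => isEmptyElim x, fun b => isEmptyElim b⟩
  · obtain ⟨x₀⟩ := hN
    obtain ⟨y₀, hy₀⟩ := hd.1 (c.v x₀)
    have hconn := hC.1
    let w : ∀ x : C.V, {l // C.IsWalk x₀ x l} := fun x =>
      ⟨(hconn x₀ x).choose, (hconn x₀ x).choose_spec⟩
    let pv : C.V → D.V := fun x => UCover.liftEnd d hd y₀ (UCover.mapc c (w x).1)
    have pv_eq : ∀ (x : C.V) (l : List C.Step), C.IsWalk x₀ x l →
        UCover.liftEnd d hd y₀ (UCover.mapc c l) = pv x := fun x l hl =>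
      UCover.liftEnd_welldef c d hd hC hy₀ hl (w x).2
    have dv_pv : ∀ x, d.v (pv x) = c.v x := fun x =>
      UCover.dv_liftEnd d hd (by rw [hy₀]; exact UCover.isWalk_mapc c (w x).2)
    have hsrc : ∀ b : C.A, Quiv.src Q (c.a b, true) = d.v (pv (C.s b)) := by
      intro b
      rw [dv_pv]
      show Q.s (c.a b) = c.v (C.s b)
      exact c.hs b
    let pa : C.A → D.A := fun b => UCover.liftArrow d hd (pv (C.s b)) (c.a b, true) (hsrc b)
    have spec := fun b => UCover.liftArrow_spec d hd (pv (C.s b)) (c.a b, true) (hsrc b)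
    have hpa_a : ∀ b, d.a (pa b) = c.a b := fun b => (spec b).1
    have hpa_s : ∀ b, D.s (pa b) = pv (C.s b) := fun b => by simpa using (spec b).2
    have hpa_t : ∀ b, D.t (pa b) = pv (C.t b) := by
      intro b
      have hstep : C.IsWalk (C.s b) (C.t b) [(b, true)] :=
        ⟨by simp [Quiv.src], by simp [Quiv.tgt, Quiv.IsWalk]⟩
      have hwalk : C.IsWalk x₀ (C.t b) ((w (C.s b)).1 ++ [(b, true)]) :=
        UCover.isWalk_append (w (C.s b)).2 hstep
      have h1 := pv_eq (C.t b) _ hwalk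
      rw [show UCover.mapc c ((w (C.s b)).1 ++ [(b, true)])
            = UCover.mapc c (w (C.s b)).1 ++ [(c.a b, true)] by simp [UCover.mapc],
        UCover.liftEnd_append] at h1
      have h2 : UCover.liftEnd d hd (pv (C.s b)) [(c.a b, true)] = D.t (pa b) := by
        show UCover.stepEnd d hd (pv (C.s b)) (c.a b, true) = D.t (pa b)
        rw [UCover.stepEnd, dif_pos (hsrc b)]
        simp [Quiv.tgt, pa]
      rw [← h1, ← h2]
    exact ⟨⟨pv, pa, hpa_s, hpa_t⟩, dv_pv, hpa_a⟩
end

section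
/- Let Q be a quiver and Q̂ its universal abelian covering quiver. If Q̂ contains a reduced unoriented cycle, then the minimal length of a reduced unoriented cycle in Q is strictly smaller than the minimal length of a reduced unoriented cycle in Q̂. -/
/-- The universal abelian covering quiver of `Q`: vertices `Q₀ × ℤ^{Q₁}`,
arrows `Q₁ × ℤ^{Q₁}`, where the arrow `(α, χ)` goes from `(s α, χ)` to `(t α, χ + α)`. -/
noncomputable def Quiv.hat (Q : Quiv) : Quiv where
  V := Q.V × (Q.A →₀ ℤ)
  A := Q.A × (Q.A →₀ ℤ)
  s := fun p => (Q.s p.1, p.2)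
  t := fun p => (Q.t p.1, p.2 + Finsupp.single p.1 1)

/-- The projection `ĉ : Q̂ → Q`, `(i,χ) ↦ i` on vertices and `(α,χ) ↦ α` on arrows. -/
noncomputable def Quiv.hatHom (Q : Quiv) : QuivHom Q.hat Q where
  v := Prod.fst
  a := Prod.fst
  hs := fun _ => rfl
  ht := fun _ => rfl

/-- The minimal length of a reduced unoriented cycle in a quiver `R`
(the infimum being `0` if there is none). -/
noncomputable def Quiv.minCycleLength (R : Quiv) : ℕ :=
  sInf {n | ∃ (v : R.V) (l : List R.Step), R.IsWalk v v l ∧ R.Reduced l ∧ l.length = n}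


namespace Quiv

attribute [local instance] Classical.propDecidable

variable (Q : Quiv)

/-- Projection of a step of `Q.hat` to a step of `Q`. -/
def projStep (e : Q.hat.Step) : Q.Step := (e.1.1, e.2)

/-- Signed count of occurrences of an arrow in a list of steps. -/
noncomputable def scount (a : Q.A) (l : List Q.Step) : ℤ :=
  (l.map fun e => if e.1 = a then (if e.2 then (1:ℤ) else -1) else 0).sum

@[simp] lemma scount_nil (a : Q.A) : Q.scount a [] = 0 := rfl

lemma scount_cons (a : Q.A) (e : Q.Step) (l : List Q.Step) :
    Q.scount a (e :: l) =
      (if e.1 = a then (if e.2 then (1:ℤ) else -1) else 0) + Q.scount a l := by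
  simp [scount]

lemma isWalk_append {i j : Q.V} {u v : List Q.Step} (h : Q.IsWalk i j (u ++ v)) :
    ∃ k, Q.IsWalk i k u ∧ Q.IsWalk k j v := by
  induction u generalizing i with
  | nil => exact ⟨i, rfl, h⟩
  | cons e t ih =>
    obtain ⟨hs, hw⟩ := h
    obtain ⟨k, h1, h2⟩ := ih hw
    exact ⟨k, ⟨hs, h1⟩, h2⟩

lemma hat_src_fst (e : Q.hat.Step) : (Q.hat.src e).1 = Q.src (Q.projStep e) := by
  obtain ⟨a, b⟩ := e; cases b <;> rfl

lemma hat_tgt_fst (e : Q.hat.Step) : (Q.hat.tgt e).1 = Q.tgt (Q.projStep e) := by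
  obtain ⟨a, b⟩ := e; cases b <;> rfl

lemma hat_walk_proj {l : List (Q.hat).Step} {p q : (Q.hat).V}
    (h : Q.hat.IsWalk p q l) : Q.IsWalk p.1 q.1 (l.map Q.projStep) := by
  induction l generalizing p with
  | nil => exact congrArg Prod.fst h
  | cons e t ih =>
    obtain ⟨hs, hw⟩ := h
    exact ⟨by rw [← hs, hat_src_fst], Q.hat_tgt_fst e ▸ ih hw⟩

lemma hat_walk_snd {l : List (Q.hat).Step} {p q : (Q.hat).V}
    (h : Q.hat.IsWalk p q l) (a : Q.A) :
    q.2 a = p.2 a + Q.scount a (l.map Q.projStep) := by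
  induction l generalizing p with
  | nil => rw [h]; simp
  | cons e t ih =>
    obtain ⟨hs, hw⟩ := h
    have ihx := ih hw
    rw [List.map_cons, scount_cons, ihx]
    subst hs
    obtain ⟨⟨b, x⟩, o⟩ := e
    cases o with
    | false =>
      simp only [Quiv.src, Quiv.tgt, Quiv.hat, projStep, Bool.false_eq_true, if_false,
        Finsupp.add_apply, Finsupp.single_apply]
      by_cases hb : b = a <;> simp [hb] <;> ring
    | true =>
      simp only [Quiv.src, Quiv.tgt, Quiv.hat, projStep, if_true, if_pos rfl,
        Finsupp.add_apply, Finsupp.single_apply]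
      by_cases hb : b = a <;> simp [hb] <;> ring

lemma hat_chain_proj {l : List (Q.hat).Step} {p q : (Q.hat).V}
    (hw : Q.hat.IsWalk p q l)
    (hc : l.Chain' (fun e f => ¬(e.1 = f.1 ∧ e.2 = !f.2))) :
    (l.map Q.projStep).Chain' (fun e f => ¬(e.1 = f.1 ∧ e.2 = !f.2)) := by
  induction l generalizing p with
  | nil => exact List.isChain_nil
  | cons e t ih =>
    obtain ⟨hs, hw'⟩ := hw
    unfold List.Chain' at hc; rw [List.isChain_cons] at hc
    unfold List.Chain'; rw [List.map_cons, List.isChain_cons]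
    refine ⟨?_, ih hw' hc.2⟩
    intro f' hf'
    cases t with
    | nil => simp at hf'
    | cons f t' =>
      simp only [List.map_cons, List.head?_cons, Option.mem_def, Option.some.injEq] at hf'
      subst hf'
      have hrel : ¬(e.1 = f.1 ∧ e.2 = !f.2) := hc.1 f rfl
      obtain ⟨hsf, -⟩ := hw'
      rintro ⟨h1, h2⟩
      apply hrel
      refine ⟨?_, h2⟩
      obtain ⟨⟨a, x⟩, o⟩ := e
      obtain ⟨⟨a', x'⟩, o'⟩ := f
      simp only [projStep] at h1 h2
      subst h1
      subst h2
      have h2nd := congrArg Prod.snd hsf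
      show ((a, x) : Q.A × (Q.A →₀ ℤ)) = (a, x')
      cases o' with
      | true =>
        simp only [Quiv.src, Quiv.tgt, Quiv.hat, Bool.not_true, Bool.false_eq_true,
          if_true, if_false] at h2nd
        rw [h2nd]
      | false =>
        simp only [Quiv.src, Quiv.tgt, Quiv.hat, Bool.not_false, Bool.false_eq_true,
          if_true, if_false] at h2nd
        rw [add_left_inj] at h2nd
        rw [h2nd]

lemma scount_of_not_mem {a : Q.A} {b : Bool} {l : List Q.Step} (h : (a, !b) ∉ l) :
    Q.scount a l = (if b then (1:ℤ) else -1) * (l.countP fun e => decide (e.1 = a)) := by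
  induction l with
  | nil => simp
  | cons e t ih =>
    have ht : (a, !b) ∉ t := fun hm => h (List.mem_cons_of_mem _ hm)
    rw [scount_cons, ih ht, List.countP_cons]
    by_cases he : e.1 = a
    · have he2 : e.2 = b := by
        by_contra hne
        apply h
        have hb2 : e.2 = !b := by cases b <;> cases hb : e.2 <;> simp_all
        have : e = (a, !b) := Prod.ext he hb2
        rw [← this]; exact List.mem_cons_self
      have hdec : (decide (e.1 = a)) = true := by simp [he]
      rw [if_pos he, he2, hdec]
      simp only [if_true]
      push_cast
      ring
    · have hdec : (decide (e.1 = a)) = false := by simp [he]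
      rw [if_neg he, hdec]
      simp

lemma opp_mem_of_scount_zero {a : Q.A} {b : Bool} {l : List Q.Step}
    (hm : (a, b) ∈ l) (h0 : Q.scount a l = 0) : (a, !b) ∈ l := by
  by_contra hn
  rw [Q.scount_of_not_mem hn] at h0
  have hpos : 0 < l.countP fun e => decide (e.1 = a) :=
    List.countP_pos_iff.2 ⟨(a, b), hm, by simp⟩
  rcases mul_eq_zero.1 h0 with h | h
  · cases b <;> simp_all
  · omega

end Quiv

/-- If the universal abelian covering quiver `Q̂` contains a reduced
unoriented cycle, then the minimal length of a reduced unoriented cycle in `Q` is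
strictly smaller than the minimal length of a reduced unoriented cycle in `Q̂`. -/
theorem stmt4 (Q : Quiv)
    (h : ∃ (v : Q.hat.V) (l : List Q.hat.Step), Q.hat.IsWalk v v l ∧ Q.hat.Reduced l) :
    Q.minCycleLength < Q.hat.minCycleLength := by
  classical
  have hne : {n | ∃ (v : Q.hat.V) (l : List Q.hat.Step),
      Q.hat.IsWalk v v l ∧ Q.hat.Reduced l ∧ l.length = n}.Nonempty := by
    obtain ⟨v, l, hw, hr⟩ := h
    exact ⟨l.length, v, l, hw, hr, rfl⟩
  obtain ⟨v, l, hw, hr, hlen⟩ := Nat.sInf_mem hne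
  set L : List Q.Step := l.map Q.projStep with hL
  have hLw : Q.IsWalk v.1 v.1 L := Q.hat_walk_proj hw
  have hLc : L.Chain' fun e f => ¬(e.1 = f.1 ∧ e.2 = !f.2) := Q.hat_chain_proj hw hr.2
  have hLne : L ≠ [] := by
    simp only [hL, ne_eq, List.map_eq_nil_iff]
    exact hr.1
  have hs0 : ∀ a, Q.scount a L = 0 := by
    intro a
    have h2 := Q.hat_walk_snd hw a
    rw [← hL] at h2
    omega
  obtain ⟨e₀, r, hLr⟩ := List.exists_cons_of_ne_nil hLne
  have hmem0 : (e₀.1, e₀.2) ∈ L := by rw [hLr]; exact List.mem_cons_self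
  have hopp : (e₀.1, !e₀.2) ∈ L := Q.opp_mem_of_scount_zero hmem0 (hs0 e₀.1)
  have hopp' : (e₀.1, !e₀.2) ∈ r := by
    rw [hLr] at hopp
    rcases List.mem_cons.1 hopp with heq | hm
    · exfalso
      have h2 : e₀.2 = !e₀.2 := by conv_lhs => rw [← heq]
      simp at h2
    · exact hm
  obtain ⟨u, v', huv⟩ := List.append_of_mem hopp'
  have hLsplit : L = e₀ :: (u ++ (e₀.1, !e₀.2) :: v') := by rw [hLr, huv]
  rw [hLsplit] at hLw
  obtain ⟨hsrc, hw2⟩ := hLw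
  obtain ⟨k, hwu, hwv⟩ := Q.isWalk_append hw2
  obtain ⟨hsrc2, -⟩ := hwv
  have hts : Q.src (e₀.1, !e₀.2) = Q.tgt e₀ := by
    obtain ⟨a, b⟩ := e₀
    cases b <;> rfl
  have hwu' : Q.IsWalk (Q.tgt e₀) (Q.tgt e₀) u := by
    rw [hts] at hsrc2
    rwa [← hsrc2] at hwu
  have hune : u ≠ [] := by
    rintro rfl
    unfold List.Chain' at hLc; rw [hLsplit, List.nil_append, List.isChain_cons_cons] at hLc
    exact hLc.1 ⟨rfl, (Bool.not_not e₀.2).symm⟩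
  have hured : Q.Reduced u := by
    refine ⟨hune, hLc.infix ?_⟩
    exact ⟨[e₀], (e₀.1, !e₀.2) :: v', by rw [hLsplit]; simp⟩
  have hle : Q.minCycleLength ≤ u.length :=
    Nat.sInf_le ⟨Q.tgt e₀, u, hwu', hured, rfl⟩
  have hlenL : L.length = Q.hat.minCycleLength := by rw [hL, List.length_map, hlen]; rfl
  have hlt : u.length < Q.hat.minCycleLength := by
    rw [← hlenL, hLsplit]
    simp only [List.length_cons, List.length_append]
    omega
  omega
end

section
/- Let Q be a quiver whose underlying graph is a tree, let l be a sink of Q which is a leaf (exactly one arrow β: k → l is adjacent to l), and let Q' be the full subquiver on Q₀ ∖ {l}. If M is a finite-dimensional representation of Q with Ext¹_Q(M,M) = 0, then the restriction M' of M to Q' satisfies Ext¹_{Q'}(M',M') = 0. -/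
/-- A representation of the quiver `Q` over the field `k`: a vector space for every
vertex and a linear map for every arrow. -/
structure QRep (k : Type) [Field k] (Q : Quiv) where
  carrier : Q.V → Type
  [acg : ∀ i, AddCommGroup (carrier i)]
  [mod : ∀ i, Module k (carrier i)]
  map : ∀ a : Q.A, carrier (Q.s a) →ₗ[k] carrier (Q.t a)

attribute [instance] QRep.acg QRep.mod

namespace QRep

variable {k : Type} [Field k] {Q : Quiv}

/-- The space `Hom_Q(M,N)` of morphisms of representations, realized as a subspace of
`⊕_{i ∈ Q₀} Hom_k(M_i, N_i)`. -/
def homSet (M N : QRep k Q) : Submodule k (∀ i, M.carrier i →ₗ[k] N.carrier i) where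
  carrier := {f | ∀ a : Q.A, N.map a ∘ₗ f (Q.s a) = f (Q.t a) ∘ₗ M.map a}
  add_mem' := by
    intro f g hf hg a
    simp only [Pi.add_apply, LinearMap.comp_add, LinearMap.add_comp, hf a, hg a]
  zero_mem' := by intro a; simp
  smul_mem' := by
    intro c f hf a
    simp only [Pi.smul_apply, LinearMap.comp_smul, LinearMap.smul_comp, hf a]

/-- The map `φ : ⊕_i Hom(M_i,N_i) → ⊕_{α} Hom(M_{s(α)}, N_{t(α)})`,
`φ((f_i)_i) = (N_α ∘ f_{s(α)} − f_{t(α)} ∘ M_α)_α`, arising from the standard projective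
resolution of `M`. -/
def extMap (M N : QRep k Q) :
    (∀ i, M.carrier i →ₗ[k] N.carrier i) →ₗ[k]
      (∀ a : Q.A, M.carrier (Q.s a) →ₗ[k] N.carrier (Q.t a)) where
  toFun f := fun a => N.map a ∘ₗ f (Q.s a) - f (Q.t a) ∘ₗ M.map a
  map_add' f g := by
    funext a
    simp only [Pi.add_apply, LinearMap.comp_add, LinearMap.add_comp]
    abel
  map_smul' c f := by
    funext a
    simp only [Pi.smul_apply, LinearMap.comp_smul, LinearMap.smul_comp, RingHom.id_apply,
      smul_sub]

/-- The extension group `Ext¹_Q(M,N)`, realized as the cokernel of `extMap M N`;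
by the standard projective resolution of `M` this is the first extension group in the
category of representations of `Q`. -/
def Ext1 (M N : QRep k Q) :=
  (∀ a : Q.A, M.carrier (Q.s a) →ₗ[k] N.carrier (Q.t a)) ⧸ LinearMap.range (extMap M N)

noncomputable instance (M N : QRep k Q) : AddCommGroup (Ext1 M N) :=
  inferInstanceAs (AddCommGroup ((∀ _a : Q.A, _ →ₗ[k] _) ⧸ LinearMap.range (extMap M N)))

noncomputable instance (M N : QRep k Q) : Module k (Ext1 M N) :=
  inferInstanceAs (Module k ((∀ _a : Q.A, _ →ₗ[k] _) ⧸ LinearMap.range (extMap M N)))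

end QRep
namespace Quiv

/-- The full subquiver of `Q` on the complement of the vertex `l`: its arrows are the
arrows of `Q` with both endpoints different from `l`. -/
def deleteVertex (Q : Quiv) (l : Q.V) : Quiv where
  V := {v : Q.V // v ≠ l}
  A := {a : Q.A // Q.s a ≠ l ∧ Q.t a ≠ l}
  s := fun a => ⟨Q.s a.1, a.2.1⟩
  t := fun a => ⟨Q.t a.1, a.2.2⟩

end Quiv

namespace QRep

variable {k : Type} [Field k] {Q : Quiv}

/-- The restriction `M'` of a representation `M` of `Q` to the full subquiver obtained
by deleting the vertex `l`: one forgets the space at `l` and the maps adjacent to `l`. -/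
def restrict (M : QRep k Q) (l : Q.V) : QRep k (Q.deleteVertex l) where
  carrier v := M.carrier v.1
  map a := M.map a.1

end QRep

open QRep in
/-- Let `Q` be a quiver whose underlying graph is a tree, `l` a sink of
`Q` which is a leaf, with unique adjacent arrow `β : k → l` (here `l = Q.t β`), and `Q'`
the full subquiver on `Q₀ ∖ {l}`.  If `M` is a finite-dimensional representation of `Q`
with `Ext¹_Q(M,M) = 0`, then the restriction `M'` of `M` to `Q'` satisfies
`Ext¹_{Q'}(M',M') = 0`. -/
theorem stmt8 {k : Type} [Field k] [IsAlgClosed k] {Q : Quiv}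
    (htree : Q.TreeShaped) (β : Q.A)
    (hsink : ∀ a : Q.A, Q.s a ≠ Q.t β)
    (hleaf : ∀ a : Q.A, Q.t a = Q.t β → a = β)
    (M : QRep k Q) [∀ i, FiniteDimensional k (M.carrier i)]
    (hrigid : Subsingleton (Ext1 M M)) :
    Subsingleton (Ext1 (M.restrict (Q.t β)) (M.restrict (Q.t β))) := by
  classical
  set l := Q.t β with hl
  have hsurj : Function.Surjective (extMap M M) := by
    rw [← LinearMap.range_eq_top]
    exact Submodule.Quotient.subsingleton_iff.mp hrigid
  refine Submodule.Quotient.subsingleton_iff.mpr ?_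
  rw [LinearMap.range_eq_top]
  intro g
  obtain ⟨f, hf⟩ := hsurj (fun a =>
    if h : Q.s a ≠ l ∧ Q.t a ≠ l then g ⟨a, h⟩ else 0)
  refine ⟨fun v => f v.1, ?_⟩
  funext a
  have h1 : extMap M M f a.1 = g a := by
    rw [hf]
    exact dif_pos a.2
  exact h1
end

section
/- Let Q be a quiver with a sink l that is a leaf with unique adjacent arrow β: k → l, let M be a representation of Q, and let M'' be the quotient of M by the subrepresentation S(l) ⊗ M_l (so M'' agrees with M away from l and M''_l = 0). If Ext¹_Q(M,M) = 0 then Ext¹_Q(M'',M'') = 0. -/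
open QRep in
/-- Let `Q` be a quiver with a sink `l` that is a leaf with unique
adjacent arrow `β : k → l` (here `l = Q.t β`), `M` a representation of `Q` and `M''` the
quotient of `M` by the subrepresentation `S(l) ⊗ M_l`, i.e. (characterized up to
isomorphism) `M''` comes with a surjective morphism `π : M → M''` which is bijective away
from `l` and `M''_l = 0`.  If `Ext¹_Q(M,M) = 0` then `Ext¹_Q(M'',M'') = 0`. -/
theorem stmt9 {k : Type} [Field k] [IsAlgClosed k] {Q : Quiv} (β : Q.A)
    (hsink : ∀ a : Q.A, Q.s a ≠ Q.t β)
    (hleaf : ∀ a : Q.A, Q.t a = Q.t β → a = β)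
    (M M'' : QRep k Q)
    [∀ i, FiniteDimensional k (M.carrier i)] [∀ i, FiniteDimensional k (M''.carrier i)]
    (π : ∀ i, M.carrier i →ₗ[k] M''.carrier i) (hπ : π ∈ homSet M M'')
    (hsurj : ∀ i, Function.Surjective (π i))
    (hbij : ∀ i, i ≠ Q.t β → Function.Bijective (π i))
    (hzero : Subsingleton (M''.carrier (Q.t β)))
    (hrigid : Subsingleton (Ext1 M M)) :
    Subsingleton (Ext1 M'' M'') := by
  classical
  have hker : LinearMap.range (extMap M M) = ⊤ :=
    Submodule.Quotient.subsingleton_iff.mp hrigid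
  have hrange : LinearMap.range (extMap M'' M'') = ⊤ := by
    rw [LinearMap.range_eq_top]
    intro g''
    -- linear equivalences away from the sink
    let e : ∀ i, i ≠ Q.t β → (M.carrier i ≃ₗ[k] M''.carrier i) :=
      fun i h => LinearEquiv.ofBijective (π i) (hbij i h)
    have he : ∀ i (h : i ≠ Q.t β) (x : M.carrier i), e i h x = π i x := fun _ _ _ => rfl
    have heπ : ∀ i (h : i ≠ Q.t β) (z : M''.carrier i), π i ((e i h).symm z) = z :=
      fun i h z => (e i h).apply_symm_apply z
    have heπ' : ∀ i (h : i ≠ Q.t β) (x : M.carrier i), (e i h).symm (π i x) = x :=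
      fun i h x => (e i h).symm_apply_apply x
    -- lift g'' to a family g on M
    set g : ∀ a : Q.A, M.carrier (Q.s a) →ₗ[k] M.carrier (Q.t a) :=
      fun a => if h : a = β then 0 else
        ((e (Q.t a) (fun ht => h (hleaf a ht))).symm.toLinearMap ∘ₗ g'' a
          ∘ₗ (e (Q.s a) (hsink a)).toLinearMap) with hg
    obtain ⟨f, hf⟩ : g ∈ LinearMap.range (extMap M M) := by rw [hker]; trivial
    set f'' : ∀ i, M''.carrier i →ₗ[k] M''.carrier i :=
      fun i => if h : i = Q.t β then 0 else
        ((e i h).toLinearMap ∘ₗ f i ∘ₗ (e i h).symm.toLinearMap) with hf''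
    refine ⟨f'', funext fun a => ?_⟩
    by_cases ha : a = β
    · subst ha
      exact Subsingleton.elim _ _
    · have hs : Q.s a ≠ Q.t β := hsink a
      have ht : Q.t a ≠ Q.t β := fun h => ha (hleaf a h)
      apply LinearMap.ext
      intro z
      obtain ⟨y, rfl⟩ := hsurj (Q.s a) z
      have hcomm : M''.map a (π (Q.s a) y) = π (Q.t a) (M.map a y) := by
        have := hπ a
        exact congrArg (fun F => F y) this.symm ▸ (LinearMap.congr_fun (hπ a) y)
      have hfa := congrFun hf a
      have hfay := LinearMap.congr_fun hfa y
      simp only [extMap, LinearMap.coe_mk, AddHom.coe_mk, LinearMap.sub_apply,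
        LinearMap.coe_comp, Function.comp_apply] at hfay ⊢
      rw [hf'']
      simp only [dif_neg hs, dif_neg ht, LinearMap.coe_comp, Function.comp_apply,
        LinearEquiv.coe_coe]
      rw [heπ' (Q.s a) hs y, hcomm, heπ' (Q.t a) ht (M.map a y)]
      have : M''.map a (π (Q.s a) (f (Q.s a) y)) = π (Q.t a) (M.map a (f (Q.s a) y)) :=
        LinearMap.congr_fun (hπ a) (f (Q.s a) y)
      rw [he (Q.s a) hs, he (Q.t a) ht, this, ← map_sub (π (Q.t a)), hfay, hg]
      simp only [dif_neg ha, LinearMap.coe_comp, Function.comp_apply, LinearEquiv.coe_coe]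
      rw [heπ (Q.t a) ht, he (Q.s a) hs]
  exact Submodule.Quotient.subsingleton_iff.mpr hrange
end
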